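/- arXiv:2511.09824 — 3 statements merged into one kernel-verified Lean document; each statement's English description precedes it below -/
import Mathlib

section
/- Let (X, R) be a transitive modal space validating the Grzegorczyk axiom. Then the following are equivalent: (1) X validates the Löb axiom, i.e., for every clopen U and every x ∈ X, if (∀y, R x y → ((∀z, R y z → z ∈ U) → y ∈ U)), then (∀y, R x y → y ∈ U); (2) for every clopen U ⊆ X and every x ∈ max_R U, it is not the case that R x x. -/
/-- `max_R U = {x ∈ U | ∀ y, R x y → y ∈ U → y = x}`. -/
def maxSet {X : Type*} (R : X → X → Prop) (U : Set X) : Set X :=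
  {x | x ∈ U ∧ ∀ y, R x y → y ∈ U → y = x}

/-- Auxiliary: in a compact zero-dimensional space, any two distinct points are
separated by a clopen set. -/
lemma clopen_sep {X : Type*} [TopologicalSpace X] [T2Space X]
    (hbasis : ∀ (x : X) (U : Set X), IsOpen U → x ∈ U →
      ∃ V : Set X, IsClopen V ∧ x ∈ V ∧ V ⊆ U)
    {a b : X} (hab : a ≠ b) : ∃ V : Set X, IsClopen V ∧ a ∈ V ∧ b ∉ V := by
  obtain ⟨Ua, Ub, hUa, hUb, haUa, hbUb, hdisj⟩ := t2_separation hab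
  obtain ⟨V, hV, haV, hVsub⟩ := hbasis a Ua hUa haUa
  refine ⟨V, hV, haV, fun hbV => ?_⟩
  exact (Set.disjoint_left.1 hdisj (hVsub hbV)) hbUb

/-- Auxiliary: in a transitive modal space validating Grz, if `x` sees a point
of a clopen set `F`, then `x` sees a maximal point of `F`. -/
lemma exists_maxSet_mem {X : Type*} [TopologicalSpace X] [CompactSpace X]
    [T2Space X] (R : X → X → Prop)
    (hbasis : ∀ (x : X) (U : Set X), IsOpen U → x ∈ U →
      ∃ V : Set X, IsClopen V ∧ x ∈ V ∧ V ⊆ U)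
    (hpointClosed : ∀ x : X, IsClosed {y | R x y})
    (htrans : Transitive R)
    (hgrz : ∀ U : Set X, IsClopen U → ∀ x : X,
      (∀ y, R x y → ((∀ z, R y z → (z ∈ U → ∀ w, R z w → w ∈ U)) → y ∈ U)) →
      x ∈ U)
    (F : Set X) (hF : IsClopen F) (x y0 : X) (hxy0 : R x y0) (hy0 : y0 ∈ F) :
    ∃ m, R x m ∧ m ∈ maxSet R F := by
  classical
  set T : Set X := {z | R x z} ∩ F with hTdef
  have hTclosed : IsClosed T := (hpointClosed x).inter hF.isClosed
  have hy0T : y0 ∈ T := ⟨hxy0, hy0⟩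
  -- Zorn on the subtype T with the preorder `a ≼ b ↔ a = b ∨ R a b`
  let r : T → T → Prop := fun a b => (a : X) = b ∨ R a b
  have hrtrans : ∀ {a b c : T}, r a b → r b c → r a c := by
    rintro a b c (hab | hab) (hbc | hbc)
    · exact Or.inl (hab.trans hbc)
    · exact Or.inr (by rw [hab]; exact hbc)
    · exact Or.inr (by rw [← hbc]; exact hab)
    · exact Or.inr (htrans hab hbc)
  have hub : ∀ c : Set T, IsChain r c → ∃ ub, ∀ a ∈ c, r a ub := by
    intro c hc
    rcases c.eq_empty_or_nonempty with rfl | hne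
    · exact ⟨⟨y0, hy0T⟩, by simp⟩
    · haveI : Nonempty c := hne.to_subtype
      haveI : IsRefl T r := ⟨fun a => Or.inl rfl⟩
      set Z : c → Set X := fun i => ({(i : X)} ∪ {z | R (i : X) z}) ∩ T with hZdef
      have hZclosed : ∀ i, IsClosed (Z i) :=
        fun i => (isClosed_singleton.union (hpointClosed _)).inter hTclosed
      have hZne : ∀ i, (Z i).Nonempty :=
        fun i => ⟨(i : X), ⟨Or.inl rfl, (i : T).2⟩⟩
      have hmono : ∀ (a b : c), r a b → Z b ⊆ Z a := by
        rintro a b (hab | hab) z ⟨hz1, hz2⟩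
        · refine ⟨?_, hz2⟩
          rw [hab]; exact hz1
        · refine ⟨?_, hz2⟩
          rcases hz1 with hz1 | hz1
          · exact Or.inr (by rw [Set.mem_singleton_iff] at hz1; rw [hz1]; exact hab)
          · exact Or.inr (htrans hab hz1)
      have hdir : Directed (· ⊇ ·) Z := by
        intro i j
        rcases hc.total i.2 j.2 with hij | hij
        · exact ⟨j, hmono i j hij, le_refl _⟩
        · exact ⟨i, le_refl _, hmono j i hij⟩
      obtain ⟨u, hu⟩ := IsCompact.nonempty_iInter_of_directed_nonempty_isCompact_isClosed
        Z hdir hZne (fun i => (hZclosed i).isCompact) hZclosed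
      have huZ : ∀ i : c, u ∈ Z i := Set.mem_iInter.1 hu
      have huT : u ∈ T := (huZ (Classical.arbitrary c)).2
      refine ⟨⟨u, huT⟩, fun a ha => ?_⟩
      rcases (huZ ⟨a, ha⟩).1 with h1 | h1
      · exact Or.inl (by rw [Set.mem_singleton_iff] at h1; exact h1.symm)
      · exact Or.inr h1
  obtain ⟨m, hm⟩ := exists_maximal_of_chains_bounded hub hrtrans
  -- m is cluster-maximal in F among successors of x
  have hxm : R x (m : X) := m.2.1
  have hmF : (m : X) ∈ F := m.2.2
  have hcm : ∀ z, R (m : X) z → z ∈ F → (z = (m : X) ∨ R z (m : X)) := by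
    intro z hz hzF
    exact hm ⟨z, ⟨htrans hxm hz, hzF⟩⟩ (Or.inr hz)
  refine ⟨(m : X), hxm, hmF, ?_⟩
  intro z hz hzF
  rcases hcm z hz hzF with h | hzm
  · exact h
  by_cases hzm' : z = (m : X)
  · exact hzm'
  exfalso
  -- proper cluster: use Grz to derive a contradiction
  have hmm : R (m : X) (m : X) := htrans hz hzm
  obtain ⟨A0, hA0, hmA0, hzA0⟩ := clopen_sep hbasis (Ne.symm hzm')
  set A : Set X := A0 ∪ Fᶜ with hAdef
  have hA : IsClopen A := hA0.union hF.compl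
  have hzA : z ∉ A := by
    rintro (h | h)
    · exact hzA0 h
    · exact h hzF
  apply hzA
  apply hgrz A hA z
  intro y hzy P
  by_contra hyA
  have hyF : y ∈ F := by
    by_contra hyF
    exact hyA (Or.inr hyF)
  have hyA0 : y ∉ A0 := fun h => hyA (Or.inl h)
  have hmy : R (m : X) y := htrans hz hzy
  rcases hcm y hmy hyF with h | hym
  · exact hyA0 (by rw [h]; exact hmA0)
  · exact hzA (P (m : X) hym (Or.inl hmA0) z hz)

/-- A transitive modal space validating the Grzegorczyk axiom
validates the Löb axiom iff no `R`-maximal point of any clopen set is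
`R`-reflexive. -/
theorem lob_iff_max_irreflexive_of_grz {X : Type*} [TopologicalSpace X]
    [CompactSpace X] [T2Space X] (R : X → X → Prop)
    (hbasis : ∀ (x : X) (U : Set X), IsOpen U → x ∈ U →
      ∃ V : Set X, IsClopen V ∧ x ∈ V ∧ V ⊆ U)
    (hpointClosed : ∀ x : X, IsClosed {y | R x y})
    (hdownClopen : ∀ U : Set X, IsClopen U → IsClopen {x | ∃ y ∈ U, R x y})
    (htrans : Transitive R)
    (hgrz : ∀ U : Set X, IsClopen U → ∀ x : X,
      (∀ y, R x y → ((∀ z, R y z → (z ∈ U → ∀ w, R z w → w ∈ U)) → y ∈ U)) →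
      x ∈ U) :
    ((∀ U : Set X, IsClopen U → ∀ x : X,
        (∀ y, R x y → ((∀ z, R y z → z ∈ U) → y ∈ U)) → (∀ y, R x y → y ∈ U))
      ↔
     (∀ U : Set X, IsClopen U → ∀ x ∈ maxSet R U, ¬ R x x)) := by
  constructor
  · -- Löb implies maximal points irreflexive
    intro hlob U hU x hx hRxx
    obtain ⟨hxU, hmaxx⟩ := hx
    have hconc : x ∈ Uᶜ := by
      refine hlob Uᶜ hU.compl x ?_ x hRxx
      intro y hxy hz
      intro hyU
      have hyx : y = x := hmaxx y hxy hyU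
      have : x ∈ Uᶜ := hz x (by rw [hyx]; exact hRxx)
      exact this hxU
    exact hconc hxU
  · -- maximal points irreflexive implies Löb
    intro hmax U hU x h y0 hxy0
    by_contra hy0
    obtain ⟨m, hxm, hmF, hmmax⟩ :=
      exists_maxSet_mem R hbasis hpointClosed htrans hgrz Uᶜ hU.compl x y0 hxy0 hy0
    have hirr : ¬ R m m := hmax Uᶜ hU.compl m ⟨hmF, hmmax⟩
    have hbox : ∀ z, R m z → z ∈ U := by
      intro z hmz
      by_contra hzU
      have hzm : z = m := hmmax z hmz hzU
      exact hirr (by rw [hzm] at hmz; exact hmz)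
    exact hmF (h m hxm hbox)
end

section
/- Let X and Y be GL-spaces, f : X → Y a pre-stable map, and D a finite family of clopen subsets of Y such that f satisfies the BFC^R for D. Then f⁻¹(max_R d) = max_R (f⁻¹(d)) for every d ∈ D. -/

lemma lob_max {Z : Type*} [TopologicalSpace Z] (R : Z → Z → Prop)
    (hlob : ∀ U : Set Z, IsClopen U → ∀ x : Z,
      (∀ y, R x y → ((∀ z, R y z → z ∈ U) → y ∈ U)) → (∀ y, R x y → y ∈ U))
    (V : Set Z) (hV : IsClopen V) (t : Z) (ht : ∃ w ∈ V, R t w) :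
    ∃ w ∈ V, R t w ∧ ∀ z, R w z → z ∉ V := by
  by_contra hc
  push_neg at hc
  obtain ⟨w, hwV, htw⟩ := ht
  have := hlob Vᶜ hV.compl t ?_ w htw
  · exact this hwV
  · intro y hty hy hyV
    obtain ⟨z, hz1, hz2⟩ := hc y hyV hty
    exact hy z hz1 hz2

/-- For a pre-stable map `f` between GL-spaces satisfying the
BFC^R for a finite family `D` of clopens, `f⁻¹(max_R d) = max_R (f⁻¹ d)` for
every `d ∈ D`. -/
theorem preimage_max_eq_max_preimage {X Y : Type*}
    [TopologicalSpace X] [CompactSpace X] [T2Space X]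
    [TopologicalSpace Y] [CompactSpace Y] [T2Space Y]
    (RX : X → X → Prop) (RY : Y → Y → Prop)
    (hbasisX : ∀ (x : X) (U : Set X), IsOpen U → x ∈ U →
      ∃ V : Set X, IsClopen V ∧ x ∈ V ∧ V ⊆ U)
    (hpointX : ∀ x : X, IsClosed {y | RX x y})
    (hdownX : ∀ U : Set X, IsClopen U → IsClopen {x | ∃ y ∈ U, RX x y})
    (htransX : Transitive RX)
    (hlobX : ∀ U : Set X, IsClopen U → ∀ x : X,
      (∀ y, RX x y → ((∀ z, RX y z → z ∈ U) → y ∈ U)) → (∀ y, RX x y → y ∈ U))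
    (hbasisY : ∀ (y : Y) (U : Set Y), IsOpen U → y ∈ U →
      ∃ V : Set Y, IsClopen V ∧ y ∈ V ∧ V ⊆ U)
    (hpointY : ∀ x : Y, IsClosed {y | RY x y})
    (hdownY : ∀ U : Set Y, IsClopen U → IsClopen {x | ∃ y ∈ U, RY x y})
    (htransY : Transitive RY)
    (hlobY : ∀ U : Set Y, IsClopen U → ∀ x : Y,
      (∀ y, RY x y → ((∀ z, RY y z → z ∈ U) → y ∈ U)) → (∀ y, RY x y → y ∈ U))
    (f : X → Y) (hf : Continuous f)
    (hpre : ∀ x y : X, (x = y ∨ RX x y) → (f x = f y ∨ RY (f x) (f y)))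
    (D : Set (Set Y)) (hDfin : D.Finite) (hDclopen : ∀ d ∈ D, IsClopen d)
    (hBFC : ∀ (x : X), ∀ d ∈ D,
      ((∃ y ∈ d, RY (f x) y) ↔ (∃ z : X, RX x z ∧ f z ∈ d)))
    (d : Set Y) (hd : d ∈ D) :
    f ⁻¹' (maxSet RY d) = maxSet RX (f ⁻¹' d) := by
  ext x
  constructor
  · rintro ⟨hxd, hxmax⟩
    refine ⟨hxd, ?_⟩
    intro y hxy hyd
    exfalso
    obtain ⟨w, hwd, hw⟩ := (hBFC x d hd).mpr ⟨y, hxy, hyd⟩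
    obtain ⟨w', hw'd, hw'R, hw'max⟩ :=
      lob_max RY hlobY d (hDclopen d hd) (f x) ⟨w, hwd, hw⟩
    have hwe : w' = f x := hxmax w' hw'R hw'd
    subst hwe
    exact hw'max w hw hwd
  · rintro ⟨hxd, hxmax⟩
    refine ⟨hxd, ?_⟩
    intro w hfw hwd
    exfalso
    obtain ⟨z, hxz, hzd⟩ := (hBFC x d hd).mp ⟨w, hwd, hfw⟩
    have hze : z = x := hxmax z hxz hzd
    rw [hze] at hxz
    obtain ⟨y, hyd, hxy, hymax⟩ :=
      lob_max RX hlobX (f ⁻¹' d) ((hDclopen d hd).preimage hf) x ⟨x, hxd, hxz⟩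
    have hye : y = x := hxmax y hxy hyd
    rw [hye] at hymax
    exact hymax x hxz hxd
end

section
/- Let X be a GL-space and d ⊆ X a clopen set. Then max_R(↓_{R⁺} d) = max_R d, where ↓_{R⁺} d := {x : ∃y ∈ d, x = y ∨ R x y}. -/
/-- In a GL-space, for any clopen `d`,
`max_R (↓_{R⁺} d) = max_R d`, where `↓_{R⁺} d = {x | ∃ y ∈ d, x = y ∨ R x y}`. -/
theorem max_downset_eq_max {X : Type*} [TopologicalSpace X]
    [CompactSpace X] [T2Space X] (R : X → X → Prop)
    (hbasis : ∀ (x : X) (U : Set X), IsOpen U → x ∈ U →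
      ∃ V : Set X, IsClopen V ∧ x ∈ V ∧ V ⊆ U)
    (hpointClosed : ∀ x : X, IsClosed {y | R x y})
    (hdownClopen : ∀ U : Set X, IsClopen U → IsClopen {x | ∃ y ∈ U, R x y})
    (htrans : Transitive R)
    (hlob : ∀ U : Set X, IsClopen U → ∀ x : X,
      (∀ y, R x y → ((∀ z, R y z → z ∈ U) → y ∈ U)) → (∀ y, R x y → y ∈ U))
    (d : Set X) (hd : IsClopen d) :
    maxSet R {x | ∃ y ∈ d, x = y ∨ R x y} = maxSet R d := by
  set D : Set X := {x | ∃ y ∈ d, x = y ∨ R x y} with hD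
  have hDeq : D = d ∪ {x | ∃ y ∈ d, R x y} := by
    ext z
    constructor
    · rintro ⟨y, hy, rfl | hzy⟩
      · exact Or.inl hy
      · exact Or.inr ⟨y, hy, hzy⟩
    · rintro (hz | ⟨y, hy, hzy⟩)
      · exact ⟨z, hz, Or.inl rfl⟩
      · exact ⟨y, hy, Or.inr hzy⟩
  have hDclopen : IsClopen D := hDeq ▸ hd.union (hdownClopen d hd)
  ext x
  constructor
  · rintro ⟨⟨y, hy, rfl | hxy⟩, hmax⟩
    · exact ⟨hy, fun z hz hzd => hmax z hz ⟨z, hzd, Or.inl rfl⟩⟩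
    · have : y = x := hmax y hxy ⟨y, hy, Or.inl rfl⟩
      subst this
      exact ⟨hy, fun z hz hzd => hmax z hz ⟨z, hzd, Or.inl rfl⟩⟩
  · rintro ⟨hxd, hmax⟩
    refine ⟨⟨x, hxd, Or.inl rfl⟩, fun y hxy hyD => ?_⟩
    -- Apply Löb to U = Dᶜ at x; this shows no R-successor of x lies in D.
    have key : ∀ z, R x z → z ∈ Dᶜ := by
      apply hlob Dᶜ hDclopen.compl x
      intro z hxz hsucc
      intro hzD
      rcases hzD with ⟨w, hw, rfl | hzw⟩
      · -- z ∈ d, R x z, so z = x by maximality; then R x x gives successor x ∈ D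
        have hzx : z = x := hmax z hxz hw
        subst hzx
        exact hsucc z hxz ⟨z, hw, Or.inl rfl⟩
      · exact hsucc w hzw ⟨w, hw, Or.inl rfl⟩
    exact absurd hyD (key y hxy)
end
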